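/- Let f(x) = (x+x²+x³)·(1−x⁴−2x⁸−x¹²+x¹⁶)/((1−x⁸)(1−x¹²)) as a formal power series over ℚ. Then the coefficient of x^m in f is 0 whenever m ≡ 0 mod 4. -/

import Mathlib

open PowerSeries

/-- Getzler's generating function
`(x+x²+x³)(1−x⁴−2x⁸−x¹²+x¹⁶)/((1−x⁸)(1−x¹²))` as a formal power series over `ℚ`. -/
noncomputable def getzlerF : PowerSeries ℚ :=
  (X + X ^ 2 + X ^ 3) * (1 - X ^ 4 - 2 * X ^ 8 - X ^ 12 + X ^ 16) *
    ((1 - X ^ 8)⁻¹ * (1 - X ^ 12)⁻¹)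

/-- "Series in X⁴" predicate. -/
def Q4 (f : PowerSeries ℚ) : Prop := ∀ n : ℕ, ¬ (4 ∣ n) → PowerSeries.coeff n f = 0

lemma Q4_mul {f g : PowerSeries ℚ} (hf : Q4 f) (hg : Q4 g) : Q4 (f * g) := by
  intro n hn
  rw [PowerSeries.coeff_mul]
  apply Finset.sum_eq_zero
  rintro ⟨i, j⟩ hij
  rw [Finset.HasAntidiagonal.mem_antidiagonal] at hij
  by_cases h4 : 4 ∣ i
  · have : ¬ 4 ∣ j := fun hj => hn (hij ▸ dvd_add h4 hj)
    rw [hg j this, mul_zero]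
  · rw [hf i h4, zero_mul]

lemma Q4_inv {f : PowerSeries ℚ} (hf : Q4 f) : Q4 f⁻¹ := by
  intro n
  induction n using Nat.strong_induction_on with
  | _ n ih =>
    intro hn
    have hn0 : n ≠ 0 := by rintro rfl; exact hn (dvd_zero 4)
    rw [PowerSeries.coeff_inv, if_neg hn0]
    have : (∑ x ∈ Finset.HasAntidiagonal.antidiagonal n,
        if x.2 < n then PowerSeries.coeff x.1 f * PowerSeries.coeff x.2 f⁻¹ else 0) = 0 := by
      apply Finset.sum_eq_zero
      rintro ⟨i, j⟩ hij
      rw [Finset.HasAntidiagonal.mem_antidiagonal] at hij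
      by_cases hlt : j < n
      · rw [if_pos hlt]
        by_cases h4 : 4 ∣ j
        · have : ¬ 4 ∣ i := fun hi => hn (hij ▸ dvd_add hi h4)
          rw [hf i this, zero_mul]
        · rw [ih j hlt h4, mul_zero]
      · rw [if_neg hlt]
    rw [this, mul_zero]

lemma Q4_poly : Q4 (1 - X ^ 4 - 2 * X ^ 8 - X ^ 12 + X ^ 16 : PowerSeries ℚ) := by
  intro n hn
  have h0 : n ≠ 0 := by rintro rfl; exact hn (dvd_zero 4)
  have h4 : n ≠ 4 := by rintro rfl; exact hn ⟨1, rfl⟩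
  have h8 : n ≠ 8 := by rintro rfl; exact hn ⟨2, rfl⟩
  have h12 : n ≠ 12 := by rintro rfl; exact hn ⟨3, rfl⟩
  have h16 : n ≠ 16 := by rintro rfl; exact hn ⟨4, rfl⟩
  simp [PowerSeries.coeff_one, PowerSeries.coeff_X_pow, h0, h4, h8, h12, h16, two_mul]

lemma Q4_one_sub_pow {k : ℕ} (hk : 4 ∣ k) : Q4 (1 - X ^ k : PowerSeries ℚ) := by
  intro n hn
  have h0 : n ≠ 0 := by rintro rfl; exact hn (dvd_zero 4)
  have hkn : n ≠ k := by rintro rfl; exact hn hk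
  simp [PowerSeries.coeff_one, PowerSeries.coeff_X_pow, h0, hkn]

/-- The coefficient of `xᵐ` in Getzler's generating function vanishes whenever
`m ≡ 0 mod 4`. -/
theorem stmt_13 (m : ℕ) (hm : m % 4 = 0) : PowerSeries.coeff m getzlerF = 0 := by
  have hm4 : 4 ∣ m := Nat.dvd_of_mod_eq_zero hm
  have hQ : Q4 ((1 - X ^ 4 - 2 * X ^ 8 - X ^ 12 + X ^ 16 : PowerSeries ℚ) *
      ((1 - X ^ 8)⁻¹ * (1 - X ^ 12)⁻¹)) :=
    Q4_mul Q4_poly (Q4_mul (Q4_inv (Q4_one_sub_pow ⟨2, rfl⟩)) (Q4_inv (Q4_one_sub_pow ⟨3, rfl⟩)))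
  have : getzlerF = (X + X ^ 2 + X ^ 3) *
      ((1 - X ^ 4 - 2 * X ^ 8 - X ^ 12 + X ^ 16 : PowerSeries ℚ) *
        ((1 - X ^ 8)⁻¹ * (1 - X ^ 12)⁻¹)) := by
    rw [getzlerF, mul_assoc]
  rw [this, PowerSeries.coeff_mul]
  apply Finset.sum_eq_zero
  rintro ⟨i, j⟩ hij
  rw [Finset.HasAntidiagonal.mem_antidiagonal] at hij
  by_cases h4 : 4 ∣ j
  · have hi4 : 4 ∣ i := by omega
    have h1 : i ≠ 1 := by rintro rfl; omega
    have h2 : i ≠ 2 := by rintro rfl; omega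
    have h3 : i ≠ 3 := by rintro rfl; omega
    have : PowerSeries.coeff i (X + X ^ 2 + X ^ 3 : PowerSeries ℚ) = 0 := by
      simp [PowerSeries.coeff_X, PowerSeries.coeff_X_pow, h1, h2, h3]
    rw [this, zero_mul]
  · rw [hQ j h4, mul_zero]
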